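/- Let X be a topological vector space over ℝ and Y a linear subspace such that the topological weight of X is at most the dimension of the quotient X/Y. Then there exists a dense linear subspace V of X with V ∩ Y = {0}. -/

import Mathlib

open Filter Topology Set

/-- The weight of a topological space: the least cardinality of a topological basis. -/
noncomputable def tweight (X : Type*) [TopologicalSpace X] : Cardinal :=
  ⨅ B : {B : Set (Set X) // TopologicalSpace.IsTopologicalBasis B}, Cardinal.mk B.1

theorem aux_li {K : Type*} [DivisionRing K] {M : Type*} [AddCommGroup M] [Module K M]
    {ι : Type*} [LinearOrder ι] (g : ι → M)
    (hg : ∀ i, g i ∉ Submodule.span K (g '' Set.Iio i)) : LinearIndependent K g := by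
  rw [linearIndependent_iff]
  intro l hl
  by_contra hne
  have hsupp : l.support.Nonempty := Finsupp.support_nonempty_iff.2 hne
  set i := l.support.max' hsupp with hi
  have hli : l i ≠ 0 := Finsupp.mem_support_iff.1 (l.support.max'_mem hsupp)
  have hsum : l i • g i + ∑ j ∈ l.support.erase i, l j • g j = 0 := by
    rw [Finsupp.linearCombination_apply, Finsupp.sum] at hl
    rw [Finset.add_sum_erase _ (fun j => l j • g j) (l.support.max'_mem hsupp)]
    exact hl
  have hmemsum : ∑ j ∈ l.support.erase i, l j • g j ∈ Submodule.span K (g '' Set.Iio i) := by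
    apply Submodule.sum_mem
    intro j hj
    apply Submodule.smul_mem
    apply Submodule.subset_span
    exact ⟨j, lt_of_le_of_ne (l.support.le_max' j (Finset.mem_of_mem_erase hj))
      (Finset.ne_of_mem_erase hj), rfl⟩
  have : g i ∈ Submodule.span K (g '' Set.Iio i) := by
    have h1 : g i = (l i)⁻¹ • (l i • g i) := by
      rw [smul_smul, inv_mul_cancel₀ hli, one_smul]
    rw [h1, eq_neg_of_add_eq_zero_left hsum]
    exact Submodule.smul_mem _ _ (Submodule.neg_mem _ hmemsum)
  exact hg i this


theorem aux_ex {X : Type*} [AddCommGroup X] [Module ℝ X] [TopologicalSpace X]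
    [IsTopologicalAddGroup X] [ContinuousSMul ℝ X] (Y : Submodule ℝ X)
    (s : Set (X ⧸ Y)) (hs : Module.rank ℝ (Submodule.span ℝ s) < Module.rank ℝ (X ⧸ Y))
    (U : Set X) (hU : IsOpen U) :
    ∃ x : X, (U.Nonempty → x ∈ U) ∧ Y.mkQ x ∉ Submodule.span ℝ s := by
  set W := Submodule.span ℝ s with hWdef
  have hW : W ≠ ⊤ := by
    intro hWt
    rw [hWt] at hs
    rw [show Module.rank ℝ (⊤ : Submodule ℝ (X ⧸ Y)) = Module.rank ℝ (X ⧸ Y) from rank_top ℝ _]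
      at hs
    exact lt_irrefl _ hs
  set Z := W.comap Y.mkQ with hZdef
  have hZ : Z ≠ ⊤ := by
    intro hZt
    apply hW
    rw [eq_top_iff]
    intro q _
    obtain ⟨x, rfl⟩ := Y.mkQ_surjective q
    have : x ∈ Z := hZt ▸ Submodule.mem_top
    exact Submodule.mem_comap.1 this
  haveI : NeBot (𝓝[{ x : ℝ | IsUnit x }] (0:ℝ)) := by
    have : { x : ℝ | IsUnit x } = {(0:ℝ)}ᶜ := by
      ext x; simp [isUnit_iff_ne_zero]
    rw [this]
    exact NormedField.nhdsNE_neBot (0:ℝ)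
  have hint : interior (Z : Set X) = ∅ := by
    by_contra hne
    exact hZ (Z.eq_top_of_nonempty_interior' (nonempty_iff_ne_empty.2 hne))
  rcases eq_empty_or_nonempty U with hUe | hUne
  · have : ∃ x : X, x ∉ Z := by
      by_contra hc
      push_neg at hc
      exact hZ (Submodule.eq_top_iff'.2 hc)
    obtain ⟨x, hx⟩ := this
    exact ⟨x, fun hn => absurd hUe hn.ne_empty, fun hm => hx (Submodule.mem_comap.2 hm)⟩
  · have : ¬ U ⊆ (Z : Set X) := by
      intro hsub
      have h2 : U ⊆ interior (Z : Set X) := interior_maximal hsub hU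
      rw [hint] at h2
      exact hUne.ne_empty (eq_empty_iff_forall_notMem.2 fun x hx => h2 hx)
    obtain ⟨x, hxU, hxZ⟩ := not_subset.1 this
    exact ⟨x, fun _ => hxU, fun hm => hxZ (Submodule.mem_comap.2 hm)⟩


theorem stmt_5 (X : Type*) [AddCommGroup X] [Module ℝ X] [TopologicalSpace X]
    [IsTopologicalAddGroup X] [ContinuousSMul ℝ X] (Y : Submodule ℝ X)
    (h : tweight X ≤ Module.rank ℝ (X ⧸ Y)) :
    ∃ V : Submodule ℝ X, Dense (V : Set X) ∧ V ⊓ Y = ⊥ := by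
  classical
  -- choose a basis realizing the weight
  obtain ⟨B, hBcard⟩ : ∃ B : {B : Set (Set X) // TopologicalSpace.IsTopologicalBasis B},
      Cardinal.mk B.1 = tweight X := by
    have hne : Set.Nonempty (Set.range fun B : {B : Set (Set X) //
        TopologicalSpace.IsTopologicalBasis B} => Cardinal.mk B.1) :=
      Set.range_nonempty _ (α := _) (h := ⟨⟨_, TopologicalSpace.isTopologicalBasis_opens⟩⟩)
    have hmem := csInf_mem hne
    obtain ⟨B, hB⟩ := hmem
    refine ⟨B, ?_⟩
    rw [tweight, ← sInf_range]
    exact hB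
  set κ := Cardinal.mk B.1 with hκ
  set ι := κ.ord.ToType with hι
  have hmkι : Cardinal.mk ι = κ := by rw [hι, Cardinal.mk_toType, Cardinal.card_ord]
  obtain ⟨e⟩ : Nonempty (ι ≃ B.1) := Cardinal.eq.1 (by rw [hmkι])
  have hrank : κ ≤ Module.rank ℝ (X ⧸ Y) := hBcard ▸ h
  have wf : WellFounded ((· < ·) : ι → ι → Prop) := (inferInstance : WellFoundedLT ι).wf
  have key : ∀ (i : ι) (g : ∀ j : ι, j < i → X),
      ∃ x : X, (((e i : Set X)).Nonempty → x ∈ (e i : Set X)) ∧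
      Y.mkQ x ∉ Submodule.span ℝ (Y.mkQ '' (Set.range fun j : Set.Iio i => g j.1 j.2)) := by
    intro i g
    apply aux_ex
    · calc Module.rank ℝ (Submodule.span ℝ (Y.mkQ '' (Set.range fun j : Set.Iio i => g j.1 j.2)))
          ≤ Cardinal.mk (Y.mkQ '' (Set.range fun j : Set.Iio i => g j.1 j.2)) := rank_span_le _
        _ ≤ Cardinal.mk (Set.range fun j : Set.Iio i => g j.1 j.2) := Cardinal.mk_image_le
        _ ≤ Cardinal.mk (Set.Iio i) := Cardinal.mk_range_le
        _ < κ := Cardinal.mk_Iio_toType_ord_lt i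
        _ ≤ _ := hrank
    · exact B.2.isOpen (e i).2
  set F : ι → X := wf.fix (C := fun _ => X) (fun i ih => Classical.choose (key i ih)) with hFdef
  have hFeq : ∀ i : ι, F i = Classical.choose (key i (fun j _ => F j)) := fun i =>
    wf.fix_eq _ i
  have hF : ∀ i : ι, ((e i : Set X).Nonempty → F i ∈ (e i : Set X)) ∧
      Y.mkQ (F i) ∉ Submodule.span ℝ (Y.mkQ '' (F '' Set.Iio i)) := by
    intro i
    have hspec := Classical.choose_spec (key i (fun j _ => F j))
    rw [← hFeq i] at hspec
    have himg : (Set.range fun j : Set.Iio i => F j.1) = F '' Set.Iio i :=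
      (Set.image_eq_range F (Set.Iio i)).symm
    rw [himg] at hspec
    exact hspec
  set g : ι → X ⧸ Y := fun i => Y.mkQ (F i) with hgdef
  have hgli : LinearIndependent ℝ g := by
    apply aux_li
    intro i
    have := (hF i).2
    rwa [show Y.mkQ '' (F '' Set.Iio i) = g '' Set.Iio i by rw [← Set.image_comp]; rfl] at this
  refine ⟨Submodule.span ℝ (Set.range F), ?_, ?_⟩
  · rw [B.2.dense_iff]
    intro o ho hone
    have hi : F (e.symm ⟨o, ho⟩) ∈ o := by
      have := (hF (e.symm ⟨o, ho⟩)).1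
      rw [e.apply_symm_apply] at this
      exact this hone
    exact ⟨F (e.symm ⟨o, ho⟩), hi, Submodule.subset_span ⟨_, rfl⟩⟩
  · rw [eq_bot_iff]
    rintro x ⟨hxV, hxY⟩
    obtain ⟨c, hc⟩ := (Finsupp.mem_span_range_iff_exists_finsupp).1 hxV
    have hq : Finsupp.linearCombination ℝ g c = 0 := by
      rw [Finsupp.linearCombination_apply, Finsupp.sum]
      have : Y.mkQ x = 0 := (Submodule.Quotient.mk_eq_zero Y).2 hxY
      calc ∑ i ∈ c.support, c i • g i = Y.mkQ (∑ i ∈ c.support, c i • F i) := by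
            rw [map_sum]; simp [hgdef]
        _ = Y.mkQ x := by rw [← hc]; rfl
        _ = 0 := this
    have hc0 : c = 0 := linearIndependent_iff.1 hgli c hq
    have : x = 0 := by rw [← hc, hc0]; simp
    simp [this]
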